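/- Let S be a subsemigroup of an inverse semigroup T that is both left and right ample in T (ss⁻¹ ∈ S and s⁻¹s ∈ S for all s ∈ S), and suppose Ts⁻¹s ∩ S = Ss for all s ∈ S. Then the image of ρ̂_S : S → I_S is both left and right ample in I_S. -/
import Mathlib


/-- An inverse semigroup: every element `a` has an inverse `a⁻¹`, and it is unique. -/
class InverseSemigroup (T : Type*) extends Semigroup T, Inv T where
  mul_inv_mul : ∀ a : T, a * a⁻¹ * a = a
  inv_mul_inv : ∀ a : T, a⁻¹ * a * a⁻¹ = a⁻¹
  inv_unique : ∀ {a b : T}, a * b * a = a → b * a * b = b → b = a⁻¹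

open scoped Classical

/-- The restriction σ_s = ρ_s|_{Tss⁻¹ ∩ Y} of the Wagner–Preston partial bijection
ρ_s : a ↦ a*s to a subset Y, as a partial map (an element of I_Y). -/
noncomputable def sigmaMap {T : Type*} [InverseSemigroup T] (Y : Set T) (s : T) : T → Option T :=
  fun a => if a ∈ Y ∧ ∃ t : T, a = t * (s * s⁻¹) then some (a * s) else none

/-- Composition of partial maps (the product in a symmetric inverse semigroup). -/
def pcomp {α : Type*} (f g : α → Option α) : α → Option α := fun a => (f a).bind g

/-- The inverse of a partial map: defined on the image of an injective partial map. -/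
noncomputable def pinv {α : Type*} (f : α → Option α) : α → Option α :=
  fun b => if h : ∃ a : α, f a = some b then some h.choose else none

section Aux
variable {T : Type*} [InverseSemigroup T]

lemma isg_mim (a : T) : a * a⁻¹ * a = a := InverseSemigroup.mul_inv_mul a
lemma isg_imi (a : T) : a⁻¹ * a * a⁻¹ = a⁻¹ := InverseSemigroup.inv_mul_inv a

lemma idem_inv {e : T} (he : e * e = e) : e⁻¹ = e :=
  (InverseSemigroup.inv_unique (by rw [he, he]) (by rw [he, he])).symm

lemma e_idem (x : T) : (x * x⁻¹) * (x * x⁻¹) = x * x⁻¹ := by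
  rw [← mul_assoc, isg_mim]

lemma f_idem (x : T) : (x⁻¹ * x) * (x⁻¹ * x) = x⁻¹ * x := by
  rw [← mul_assoc, isg_imi]

lemma dom_iff {e a : T} (he : e * e = e) : (∃ t, a = t * e) ↔ a * e = a :=
  ⟨fun ⟨t, ht⟩ => by rw [ht, mul_assoc, he], fun h => ⟨a, h.symm⟩⟩

lemma sigma_some {Y : Set T} {x a b : T} (h : sigmaMap Y x a = some b) :
    a ∈ Y ∧ a * (x * x⁻¹) = a ∧ b = a * x := by
  unfold sigmaMap at h
  by_cases hc : a ∈ Y ∧ ∃ t : T, a = t * (x * x⁻¹)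
  · rw [if_pos hc] at h
    exact ⟨hc.1, (dom_iff (e_idem x)).1 hc.2, (Option.some_inj.1 h).symm⟩
  · rw [if_neg hc] at h
    exact absurd h (by simp)

end Aux

/-- If S is left and right ample in T and Ts⁻¹s ∩ S = Ss for all s ∈ S, then the image of
ρ̂_S : S → I_S is both left and right ample in I_S. -/
theorem stmt11 {T : Type*} [InverseSemigroup T] (S : Subsemigroup T)
    (hla : ∀ s ∈ S, s * s⁻¹ ∈ S) (hra : ∀ s ∈ S, s⁻¹ * s ∈ S)
    (hdom : ∀ s ∈ S, {a : T | ∃ t : T, a = t * (s⁻¹ * s)} ∩ (S : Set T) =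
      {a : T | ∃ u ∈ S, a = u * s}) :
    ∀ x ∈ S,
      (∃ s ∈ S, pcomp (sigmaMap (S : Set T) x) (pinv (sigmaMap (S : Set T) x)) =
        sigmaMap (S : Set T) s) ∧
      (∃ s ∈ S, pcomp (pinv (sigmaMap (S : Set T) x)) (sigmaMap (S : Set T) x) =
        sigmaMap (S : Set T) s) := by
  intro x hx
  have hee : (x * x⁻¹) * (x * x⁻¹) = x * x⁻¹ := e_idem x
  have hff : (x⁻¹ * x) * (x⁻¹ * x) = x⁻¹ * x := f_idem x
  have hei : (x * x⁻¹)⁻¹ = x * x⁻¹ := idem_inv hee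
  have hfi : (x⁻¹ * x)⁻¹ = x⁻¹ * x := idem_inv hff
  constructor
  · refine ⟨x * x⁻¹, hla x hx, ?_⟩
    funext a
    by_cases hc : a ∈ (S : Set T) ∧ ∃ t : T, a = t * (x * x⁻¹)
    · have hae : a * (x * x⁻¹) = a := (dom_iff hee).1 hc.2
      have hfa : sigmaMap (S : Set T) x a = some (a * x) := by
        unfold sigmaMap; rw [if_pos hc]
      have hex : ∃ a' : T, sigmaMap (S : Set T) x a' = some (a * x) := ⟨a, hfa⟩
      obtain ⟨_, h2, h3⟩ := sigma_some hex.choose_spec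
      have hch : hex.choose = a := by
        calc hex.choose = hex.choose * (x * x⁻¹) := h2.symm
          _ = hex.choose * x * x⁻¹ := by rw [mul_assoc]
          _ = a * x * x⁻¹ := by rw [← h3]
          _ = a := by rw [mul_assoc]; exact hae
      have lhs : pcomp (sigmaMap (S : Set T) x) (pinv (sigmaMap (S : Set T) x)) a = some a := by
        simp only [pcomp, hfa, Option.bind_some, pinv, dif_pos hex, hch]
      rw [lhs]
      unfold sigmaMap
      rw [if_pos ⟨hc.1, by rw [hei, hee]; exact hc.2⟩]
      rw [hae]
    · have hfa : sigmaMap (S : Set T) x a = none := by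
        unfold sigmaMap; rw [if_neg hc]
      have lhs : pcomp (sigmaMap (S : Set T) x) (pinv (sigmaMap (S : Set T) x)) a = none := by
        simp [pcomp, hfa]
      rw [lhs]
      unfold sigmaMap
      rw [if_neg (by rw [hei, hee]; exact hc)]
  · refine ⟨x⁻¹ * x, hra x hx, ?_⟩
    funext b
    by_cases hex : ∃ a : T, sigmaMap (S : Set T) x a = some b
    · have lhs : pcomp (pinv (sigmaMap (S : Set T) x)) (sigmaMap (S : Set T) x) b = some b := by
        simp only [pcomp, pinv, dif_pos hex, Option.bind_some, hex.choose_spec]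
      rw [lhs]
      obtain ⟨a, ha⟩ := hex
      obtain ⟨haS, h2, h3⟩ := sigma_some ha
      have hbS : b ∈ (S : Set T) := by rw [h3]; exact mul_mem haS hx
      have hbf : b * (x⁻¹ * x) = b := by
        rw [h3, mul_assoc, ← mul_assoc x, isg_mim]
      unfold sigmaMap
      rw [if_pos ⟨hbS, by rw [hfi, hff]; exact (dom_iff hff).2 hbf⟩, hbf]
    · have lhs : pcomp (pinv (sigmaMap (S : Set T) x)) (sigmaMap (S : Set T) x) b = none := by
        simp [pcomp, pinv, dif_neg hex]
      rw [lhs]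
      unfold sigmaMap
      rw [if_neg ?_]
      rintro ⟨hbS, ht⟩
      rw [hfi, hff] at ht
      have hb : b ∈ {a : T | ∃ u ∈ S, a = u * x} := by
        rw [← hdom x hx]; exact ⟨ht, hbS⟩
      obtain ⟨u, huS, hbu⟩ := hb
      apply hex
      refine ⟨u * (x * x⁻¹), ?_⟩
      unfold sigmaMap
      rw [if_pos ⟨mul_mem huS (hla x hx), u, rfl⟩]
      rw [mul_assoc, isg_mim, ← hbu]
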